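/- arXiv:1803.02702 — 3 statements merged into one kernel-verified Lean document; each statement's English description precedes it below -/
import Mathlib

section
/- For every angle θ in the open interval (0, π/2), the quantity q(θ) := arcsin( sqrt((cos θ − 1)^2 (1 + 2 cos θ)) / sin θ ) satisfies q(θ) < θ. -/
open Real

theorem q_lt_theta (θ : ℝ) (hθ : θ ∈ Set.Ioo 0 (π / 2)) :
    arcsin (Real.sqrt ((Real.cos θ - 1) ^ 2 * (1 + 2 * Real.cos θ)) / Real.sin θ) < θ := by
  obtain ⟨h0, h2⟩ := hθ
  have hs : 0 < Real.sin θ := Real.sin_pos_of_pos_of_lt_pi h0 (h2.trans (by linarith [pi_pos]))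
  have hc : 0 < Real.cos θ := Real.cos_pos_of_mem_Ioo ⟨by linarith [pi_pos], h2⟩
  have hc1 : Real.cos θ < 1 := by
    nlinarith [Real.sin_sq_add_cos_sq θ]
  rw [Real.arcsin_lt_iff_lt_sin' ⟨by linarith [pi_pos], le_of_lt h2⟩]
  rw [div_lt_iff₀ hs]
  have key : Real.sqrt ((Real.cos θ - 1) ^ 2 * (1 + 2 * Real.cos θ)) < Real.sin θ ^ 2 := by
    have h1 : Real.sin θ ^ 2 = (1 - Real.cos θ) * (1 + Real.cos θ) := by
      have := Real.sin_sq_add_cos_sq θ; nlinarith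
    rw [h1]
    have hnn : (0:ℝ) ≤ (Real.cos θ - 1) ^ 2 * (1 + 2 * Real.cos θ) := by nlinarith
    have h2' : (Real.cos θ - 1) ^ 2 * (1 + 2 * Real.cos θ) < ((1 - Real.cos θ) * (1 + Real.cos θ)) ^ 2 := by
      nlinarith [mul_pos (mul_pos (sub_pos.2 hc1) hc) (mul_pos (sub_pos.2 hc1) hc)]
    calc Real.sqrt ((Real.cos θ - 1) ^ 2 * (1 + 2 * Real.cos θ))
        < Real.sqrt (((1 - Real.cos θ) * (1 + Real.cos θ)) ^ 2) :=
          Real.sqrt_lt_sqrt hnn h2'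
      _ = (1 - Real.cos θ) * (1 + Real.cos θ) := by
          rw [Real.sqrt_sq (by nlinarith)]
  nlinarith [Real.sin_sq_add_cos_sq θ, key]
end

section
/- For fixed θ ∈ (0, π/2), the function σ(θ, τ) := arcsin( sqrt(1 + 2 cos²τ cos θ − 2 cos²τ − cos²θ) / sin τ ) is monotonically increasing in τ on the interval [θ/2 , θ], and σ(θ, θ) = q(θ) where q(θ) = arcsin( sqrt((cos θ − 1)²(1 + 2 cos θ)) / sin θ ). -/
open Real

noncomputable def sigma_fn (θ τ : ℝ) : ℝ :=
  arcsin (Real.sqrt (1 + 2 * Real.cos τ ^ 2 * Real.cos θ - 2 * Real.cos τ ^ 2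
    - Real.cos θ ^ 2) / Real.sin τ)

noncomputable def q_fn (θ : ℝ) : ℝ :=
  arcsin (Real.sqrt ((Real.cos θ - 1) ^ 2 * (1 + 2 * Real.cos θ)) / Real.sin θ)

/-- For fixed `θ ∈ (0, π/2)`, `σ(θ, ·)` is monotonically increasing on `[θ/2, θ]`,
and `σ(θ, θ) = q(θ)`. -/
theorem sigma_monotone_and_endpoint (θ : ℝ) (hθ : θ ∈ Set.Ioo 0 (π / 2)) :
    MonotoneOn (fun τ => sigma_fn θ τ) (Set.Icc (θ / 2) θ) ∧ sigma_fn θ θ = q_fn θ := by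
  obtain ⟨hθ0, hθπ⟩ := hθ
  constructor
  · intro x hx y hy hxy
    obtain ⟨hx1, hx2⟩ := hx
    obtain ⟨hy1, hy2⟩ := hy
    have hx0 : 0 < x := lt_of_lt_of_le (by linarith) hx1
    have hy0 : 0 < y := lt_of_lt_of_le (by linarith) hy1
    have hxπ : x < π / 2 := lt_of_le_of_lt hx2 hθπ
    have hyπ : y < π / 2 := lt_of_le_of_lt hy2 hθπ
    have hsx : 0 < Real.sin x := Real.sin_pos_of_pos_of_lt_pi hx0 (by linarith [Real.pi_pos])
    have hsy : 0 < Real.sin y := Real.sin_pos_of_pos_of_lt_pi hy0 (by linarith [Real.pi_pos])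
    have hsle : Real.sin x ≤ Real.sin y := by
      apply Real.strictMonoOn_sin.monotoneOn ⟨by linarith, le_of_lt hxπ⟩
        ⟨by linarith, le_of_lt hyπ⟩ hxy
    simp only [sigma_fn]
    apply Real.monotone_arcsin
    have key : ∀ τ : ℝ, 0 < Real.sin τ →
        Real.sqrt (1 + 2 * Real.cos τ ^ 2 * Real.cos θ - 2 * Real.cos τ ^ 2
          - Real.cos θ ^ 2) / Real.sin τ
        = Real.sqrt ((1 + 2 * Real.cos τ ^ 2 * Real.cos θ - 2 * Real.cos τ ^ 2
          - Real.cos θ ^ 2) / Real.sin τ ^ 2) := by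
      intro τ hτ
      rw [Real.sqrt_div' _ (sq_nonneg _), Real.sqrt_sq hτ.le]
    rw [key x hsx, key y hsy]
    apply Real.sqrt_le_sqrt
    rw [div_le_div_iff₀ (by positivity) (by positivity)]
    have px := Real.sin_sq_add_cos_sq x
    have py := Real.sin_sq_add_cos_sq y
    have h1 : Real.sin x ^ 2 ≤ Real.sin y ^ 2 := by nlinarith
    have hcx : Real.cos x ^ 2 = 1 - Real.sin x ^ 2 := by linarith
    have hcy : Real.cos y ^ 2 = 1 - Real.sin y ^ 2 := by linarith
    rw [hcx, hcy]
    nlinarith [mul_nonneg (sq_nonneg (Real.cos θ - 1)) (sub_nonneg.2 h1)]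
  · have h : (1 + 2 * Real.cos θ ^ 2 * Real.cos θ - 2 * Real.cos θ ^ 2 - Real.cos θ ^ 2)
      = (Real.cos θ - 1) ^ 2 * (1 + 2 * Real.cos θ) := by ring
    simp [sigma_fn, q_fn, h]
end

section
/- Symmetrization step: for A ⊆ C_θ(x) measurable with s(A) > 0 and u uniform in A, E[s(C_θ(u) ∩ A)] = (2/s(A)) ∫_A ∫_A 1[⟨v,u⟩ ≥ cos θ] · 1[⟨x,v⟩ ≥ ⟨x,u⟩] ds(v) ds(u) ≤ 2 · max_{u ∈ C_θ(x)} s( C_θ(u) ∩ C_{arccos⟨x,u⟩}(x) ). -/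
open Real MeasureTheory

open scoped Classical in
/-- Symmetrization step: for `A ⊆ C_θ(x)` measurable with `s(A) > 0` and `u`
uniform in `A` (tie set of measure zero),
`E[s(C_θ(u) ∩ A)] = (2/s(A)) ∫_A ∫_A 1[⟨v,u⟩ ≥ cos θ] 1[⟨x,v⟩ ≥ ⟨x,u⟩]`
and this is at most `2 max_{u ∈ C_θ(x)} s(C_θ(u) ∩ C_{arccos⟨x,u⟩}(x))`. -/
theorem symmetrization_step (d : ℕ) (θ : ℝ) (hθ : θ ∈ Set.Ioo 0 (π / 2))
    (μ : Measure (EuclideanSpace ℝ (Fin d)))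
    (S : Set (EuclideanSpace ℝ (Fin d))) (hS : S = Metric.sphere 0 1)
    (hprob : μ S = 1)
    (x : EuclideanSpace ℝ (Fin d)) (hx : x ∈ S)
    (A : Set (EuclideanSpace ℝ (Fin d))) (hA : MeasurableSet A)
    (hAsub : A ⊆ {y ∈ S | (inner ℝ x y : ℝ) ≥ Real.cos θ})
    (hApos : 0 < μ A)
    (hties : (μ.restrict A).prod (μ.restrict A)
      {p : EuclideanSpace ℝ (Fin d) × EuclideanSpace ℝ (Fin d) |
        (inner ℝ p.1 p.2 : ℝ) ≥ Real.cos θ ∧ (inner ℝ x p.1 : ℝ) = (inner ℝ x p.2 : ℝ)} = 0) :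
    (1 / (μ A).toReal) *
        ∫ u, (μ ({y ∈ S | (inner ℝ u y : ℝ) ≥ Real.cos θ} ∩ A)).toReal ∂(μ.restrict A) =
      (2 / (μ A).toReal) *
        ∫ u, ∫ v, (if (inner ℝ v u : ℝ) ≥ Real.cos θ ∧ (inner ℝ x v : ℝ) ≥ (inner ℝ x u : ℝ)
          then (1 : ℝ) else 0) ∂(μ.restrict A) ∂(μ.restrict A) ∧
    (1 / (μ A).toReal) *
        ∫ u, (μ ({y ∈ S | (inner ℝ u y : ℝ) ≥ Real.cos θ} ∩ A)).toReal ∂(μ.restrict A) ≤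
      2 * sSup {r : ℝ | ∃ u ∈ {y ∈ S | (inner ℝ x y : ℝ) ≥ Real.cos θ},
        r = (μ ({y ∈ S | (inner ℝ u y : ℝ) ≥ Real.cos θ} ∩
          {y ∈ S | (inner ℝ x y : ℝ) ≥ Real.cos (Real.arccos (inner ℝ x u))})).toReal} := by
  have hAS : A ⊆ S := fun y hy => (hAsub hy).1
  have hnorm : ∀ y ∈ S, ‖y‖ = 1 := by
    intro y hy; rw [hS] at hy; exact mem_sphere_zero_iff_norm.1 hy
  have hAfin : μ A ≤ 1 := hprob ▸ measure_mono hAS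
  have hAlt : μ A < ⊤ := hAfin.trans_lt ENNReal.one_lt_top
  set ν := μ.restrict A with hν
  haveI : IsFiniteMeasure ν := ⟨by
    rw [hν, Measure.restrict_apply_univ]; exact hAlt⟩
  -- the three product sets
  set G : Set (EuclideanSpace ℝ (Fin d) × EuclideanSpace ℝ (Fin d)) := {p | (inner ℝ p.2 p.1 : ℝ) ≥ Real.cos θ} with hG
  set F : Set (EuclideanSpace ℝ (Fin d) × EuclideanSpace ℝ (Fin d)) :=
    {p | (inner ℝ p.2 p.1 : ℝ) ≥ Real.cos θ ∧ (inner ℝ x p.2 : ℝ) ≥ (inner ℝ x p.1 : ℝ)} with hF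
  set F' : Set (EuclideanSpace ℝ (Fin d) × EuclideanSpace ℝ (Fin d)) :=
    {p | (inner ℝ p.2 p.1 : ℝ) ≥ Real.cos θ ∧ (inner ℝ x p.2 : ℝ) < (inner ℝ x p.1 : ℝ)} with hF'
  have hcont1 : Continuous fun p : EuclideanSpace ℝ (Fin d) × EuclideanSpace ℝ (Fin d) => (inner ℝ p.2 p.1 : ℝ) :=
    continuous_inner.comp (continuous_snd.prodMk continuous_fst)
  have hcont2 : Continuous fun p : EuclideanSpace ℝ (Fin d) × EuclideanSpace ℝ (Fin d) => (inner ℝ x p.2 : ℝ) :=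
    Continuous.inner continuous_const continuous_snd
  have hcont3 : Continuous fun p : EuclideanSpace ℝ (Fin d) × EuclideanSpace ℝ (Fin d) => (inner ℝ x p.1 : ℝ) :=
    Continuous.inner continuous_const continuous_fst
  have msG : MeasurableSet G :=
    measurableSet_le measurable_const hcont1.measurable
  have msF : MeasurableSet F :=
    (measurableSet_le measurable_const hcont1.measurable).inter
      (measurableSet_le hcont3.measurable hcont2.measurable)
  have msF' : MeasurableSet F' :=
    (measurableSet_le measurable_const hcont1.measurable).inter
      (measurableSet_lt hcont2.measurable hcont3.measurable)
  -- sections are measurable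
  have msSec : ∀ (T : Set (EuclideanSpace ℝ (Fin d) × EuclideanSpace ℝ (Fin d))), MeasurableSet T → ∀ u : EuclideanSpace ℝ (Fin d),
      MeasurableSet (Prod.mk u ⁻¹' T) := fun T hT u => hT.preimage (measurable_prodMk_left)
  -- generic: integral of toReal of sections equals toReal of product measure
  have key : ∀ (T : Set (EuclideanSpace ℝ (Fin d) × EuclideanSpace ℝ (Fin d))), MeasurableSet T →
      ∫ u, (ν (Prod.mk u ⁻¹' T)).toReal ∂ν = ((ν.prod ν) T).toReal := by
    intro T hT
    rw [Measure.prod_apply hT, ← integral_toReal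
      (measurable_measure_prodMk_left hT).aemeasurable
      (ae_of_all _ fun u => measure_lt_top ν _)]
  -- rewrite the LHS integrand
  have hL : ∀ u : EuclideanSpace ℝ (Fin d), μ ({y ∈ S | (inner ℝ u y : ℝ) ≥ Real.cos θ} ∩ A) = ν (Prod.mk u ⁻¹' G) := by
    intro u
    rw [hν, Measure.restrict_apply (msSec G msG u)]
    congr 1
    ext v
    simp only [Set.mem_inter_iff, Set.mem_setOf_eq, Set.mem_preimage, hG]
    constructor
    · rintro ⟨⟨_, h2⟩, h3⟩; exact ⟨by rwa [real_inner_comm], h3⟩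
    · rintro ⟨h1, h2⟩; exact ⟨⟨hAS h2, by rwa [real_inner_comm]⟩, h2⟩
  have hLHS : ∫ u, (μ ({y ∈ S | (inner ℝ u y : ℝ) ≥ Real.cos θ} ∩ A)).toReal ∂ν
      = ((ν.prod ν) G).toReal := by
    rw [← key G msG]
    exact integral_congr_ae (ae_of_all _ fun u => congrArg ENNReal.toReal (hL u))
  -- rewrite the double integral on the RHS
  have hRHS : (∫ u, ∫ v, (if (inner ℝ v u : ℝ) ≥ Real.cos θ ∧ (inner ℝ x v : ℝ) ≥ (inner ℝ x u : ℝ)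
      then (1 : ℝ) else 0) ∂ν ∂ν) = ((ν.prod ν) F).toReal := by
    rw [← key F msF]
    refine integral_congr_ae (ae_of_all _ fun u => ?_)
    show (∫ v, (if (inner ℝ v u : ℝ) ≥ Real.cos θ ∧ (inner ℝ x v : ℝ) ≥ (inner ℝ x u : ℝ)
      then (1 : ℝ) else 0) ∂ν) = (ν (Prod.mk u ⁻¹' F)).toReal
    have : (fun v => (if (inner ℝ v u : ℝ) ≥ Real.cos θ ∧ (inner ℝ x v : ℝ) ≥ (inner ℝ x u : ℝ)
        then (1 : ℝ) else 0)) = (Prod.mk u ⁻¹' F).indicator 1 := by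
      funext v
      simp only [Set.indicator_apply, Set.mem_preimage, hF, Set.mem_setOf_eq, Pi.one_apply]
    rw [this, integral_indicator_one (msSec F msF u)]; rfl
  -- measure identity: (ν.prod ν) G = 2 * (ν.prod ν) F
  have hsplit : G = F ∪ F' := by
    ext p
    simp only [hG, hF, hF', Set.mem_setOf_eq, Set.mem_union]
    constructor
    · intro h
      rcases le_or_gt (inner ℝ x p.1 : ℝ) (inner ℝ x p.2 : ℝ) with h' | h'
      · exact Or.inl ⟨h, h'⟩
      · exact Or.inr ⟨h, h'⟩
    · rintro (⟨h, _⟩ | ⟨h, _⟩) <;> exact h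
  have hdisj : Disjoint F F' := by
    rw [Set.disjoint_left]
    rintro p ⟨_, h2⟩ ⟨_, h4⟩
    exact absurd h4 (not_lt.2 h2)
  have hswap : (ν.prod ν) (Prod.swap ⁻¹' F) = (ν.prod ν) F := by
    conv_rhs => rw [← Measure.prod_swap (μ := ν) (ν := ν)]
    rw [Measure.map_apply measurable_swap msF]
  have hF'eq : (ν.prod ν) F' = (ν.prod ν) F := by
    have hsub1 : F' ⊆ Prod.swap ⁻¹' F := by
      rintro p ⟨h1, h2⟩
      simp only [Set.mem_preimage, hF, Set.mem_setOf_eq, Prod.fst_swap, Prod.snd_swap]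
      exact ⟨by rwa [real_inner_comm], le_of_lt h2⟩
    have hsub2 : Prod.swap ⁻¹' F ⊆ F' ∪
        {p : EuclideanSpace ℝ (Fin d) × EuclideanSpace ℝ (Fin d) | (inner ℝ p.1 p.2 : ℝ) ≥ Real.cos θ ∧ (inner ℝ x p.1 : ℝ) = (inner ℝ x p.2 : ℝ)} := by
      rintro p hp
      simp only [Set.mem_preimage, hF, Set.mem_setOf_eq, Prod.fst_swap, Prod.snd_swap] at hp
      obtain ⟨h1, h2⟩ := hp
      rcases lt_or_ge (inner ℝ x p.2 : ℝ) (inner ℝ x p.1 : ℝ) with h' | h'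
      · exact Or.inl ⟨by rwa [real_inner_comm], h'⟩
      · exact Or.inr ⟨h1, le_antisymm h' h2⟩
    refine le_antisymm ?_ ?_
    · rw [← hswap]; exact measure_mono hsub1
    · rw [← hswap]
      calc (ν.prod ν) (Prod.swap ⁻¹' F) ≤ (ν.prod ν) (F' ∪ _) := measure_mono hsub2
        _ ≤ (ν.prod ν) F' + _ := measure_union_le _ _
        _ = (ν.prod ν) F' := by rw [hties]; simp
  have hGF : (ν.prod ν) G = 2 * (ν.prod ν) F := by
    rw [hsplit, measure_union hdisj msF', hF'eq, two_mul]
  have hGFr : ((ν.prod ν) G).toReal = 2 * ((ν.prod ν) F).toReal := by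
    rw [hGF, ENNReal.toReal_mul]; norm_num
  have ha : (0 : ℝ) < (μ A).toReal := ENNReal.toReal_pos hApos.ne' hAlt.ne
  constructor
  · rw [hLHS, hRHS, hGFr]; ring
  · -- inequality
    rw [hLHS, hGFr]
    set M := sSup {r : ℝ | ∃ u ∈ {y ∈ S | (inner ℝ x y : ℝ) ≥ Real.cos θ},
        r = (μ ({y ∈ S | (inner ℝ u y : ℝ) ≥ Real.cos θ} ∩
          {y ∈ S | (inner ℝ x y : ℝ) ≥ Real.cos (Real.arccos (inner ℝ x u))})).toReal} with hM
    have hbdd : BddAbove {r : ℝ | ∃ u ∈ {y ∈ S | (inner ℝ x y : ℝ) ≥ Real.cos θ},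
        r = (μ ({y ∈ S | (inner ℝ u y : ℝ) ≥ Real.cos θ} ∩
          {y ∈ S | (inner ℝ x y : ℝ) ≥ Real.cos (Real.arccos (inner ℝ x u))})).toReal} := by
      refine ⟨1, ?_⟩
      rintro r ⟨u, _, rfl⟩
      have hle : μ ({y ∈ S | (inner ℝ u y : ℝ) ≥ Real.cos θ} ∩
          {y ∈ S | (inner ℝ x y : ℝ) ≥ Real.cos (Real.arccos (inner ℝ x u))}) ≤ 1 := by
        refine hprob ▸ measure_mono ?_
        rintro v ⟨⟨hv, _⟩, _⟩; exact hv
      calc _ ≤ (1 : ENNReal).toReal := ENNReal.toReal_mono ENNReal.one_ne_top hle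
        _ = 1 := by simp
    -- bound for the sections
    have hsec : ∀ u ∈ A, (ν (Prod.mk u ⁻¹' F)).toReal ≤ M := by
      intro u huA
      have hu1 : ‖u‖ = 1 := hnorm u (hAS huA)
      have hxu : |(inner ℝ x u : ℝ)| ≤ 1 := by
        have := abs_real_inner_le_norm x u
        rwa [hnorm x hx, hu1, one_mul] at this
      have hcos : Real.cos (Real.arccos (inner ℝ x u)) = (inner ℝ x u : ℝ) :=
        Real.cos_arccos (neg_le_of_abs_le hxu) (le_of_abs_le hxu)
      have hsub : (Prod.mk u ⁻¹' F) ∩ A ⊆ {y ∈ S | (inner ℝ u y : ℝ) ≥ Real.cos θ} ∩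
          {y ∈ S | (inner ℝ x y : ℝ) ≥ Real.cos (Real.arccos (inner ℝ x u))} := by
        rintro v ⟨⟨h1, h2⟩, hvA⟩
        exact ⟨⟨hAS hvA, by rwa [real_inner_comm]⟩, ⟨hAS hvA, by rwa [hcos]⟩⟩
      have hfin : μ ({y ∈ S | (inner ℝ u y : ℝ) ≥ Real.cos θ} ∩
          {y ∈ S | (inner ℝ x y : ℝ) ≥ Real.cos (Real.arccos (inner ℝ x u))}) ≤ 1 := by
        refine hprob ▸ measure_mono ?_
        rintro v ⟨⟨hv, _⟩, _⟩; exact hv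
      have h1 : ν (Prod.mk u ⁻¹' F) ≤ μ ({y ∈ S | (inner ℝ u y : ℝ) ≥ Real.cos θ} ∩
          {y ∈ S | (inner ℝ x y : ℝ) ≥ Real.cos (Real.arccos (inner ℝ x u))}) := by
        rw [hν, Measure.restrict_apply (msSec F msF u)]
        exact measure_mono hsub
      refine le_trans (ENNReal.toReal_mono (hfin.trans_lt ENNReal.one_lt_top).ne h1) ?_
      exact le_csSup hbdd ⟨u, hAsub huA, rfl⟩
    -- integrate the bound
    have hint : ((ν.prod ν) F).toReal ≤ M * (μ A).toReal := by
      rw [← key F msF]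
      have hae : ∀ᵐ u ∂ν, ‖(ν (Prod.mk u ⁻¹' F)).toReal‖ ≤ M := by
        refine (ae_restrict_mem hA).mono fun u hu => ?_
        rw [Real.norm_eq_abs, abs_of_nonneg ENNReal.toReal_nonneg]
        exact hsec u hu
      have := norm_integral_le_of_norm_le_const (μ := ν) hae
      rw [hν, Measure.real, Measure.restrict_apply_univ] at this
      exact le_trans (le_abs_self _) this
    calc (1 / (μ A).toReal) * (2 * ((ν.prod ν) F).toReal)
        ≤ (1 / (μ A).toReal) * (2 * (M * (μ A).toReal)) := by
          apply mul_le_mul_of_nonneg_left _ (by positivity)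
          linarith
      _ = 2 * M := by field_simp
end
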